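/- Let a = (a1,a2) be a unit vector with a1 > a2 > 0 and let a1 - a2 ≤ t ≤ a1 + a2. Then for every nonnegative integer M, the integral over the slice {x ∈ [-1/2,1/2]^2 : ⟨a,x⟩ = t/2} of x1^M + x2^M with respect to 1-dimensional Hausdorff measure equals (1/((M+1)·2^{M+1})) · ( 1/a1 + 1/a2 - (t-a1)^{M+1}/(a1·a2^{M+1}) - (t-a2)^{M+1}/(a1^{M+1}·a2) ). -/

import Mathlib

open MeasureTheory Set

set_option maxHeartbeats 1600000 in
theorem moment_slice_square_chamber2
    (a1 a2 t : ℝ) (M : ℕ)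
    (hunit : a1 ^ 2 + a2 ^ 2 = 1) (h12 : a1 > a2) (h2 : a2 > 0)
    (ht0 : a1 - a2 ≤ t) (ht1 : t ≤ a1 + a2) :
    ∫ x in {x : EuclideanSpace ℝ (Fin 2) |
        (∀ i, |x i| ≤ 1 / 2) ∧ a1 * x 0 + a2 * x 1 = t / 2},
        ((x 0) ^ M + (x 1) ^ M) ∂(μH[1])
      = (1 / ((M + 1) * 2 ^ (M + 1))) *
          (1 / a1 + 1 / a2 - (t - a1) ^ (M + 1) / (a1 * a2 ^ (M + 1))
            - (t - a2) ^ (M + 1) / (a1 ^ (M + 1) * a2)) := by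
  have h1 : a1 > 0 := lt_trans h2 h12
  have ha1 : a1 ≠ 0 := ne_of_gt h1
  have ha2 : a2 ≠ 0 := ne_of_gt h2
  set L : ℝ := (a1 + a2 - t) / (2 * a1 * a2) with hLdef
  have hLnn : 0 ≤ L := div_nonneg (by linarith) (by positivity)
  set f : ℝ → EuclideanSpace ℝ (Fin 2) := fun s =>
    (WithLp.equiv 2 (Fin 2 → ℝ)).symm ![1 / 2 - a2 * s, (t - a1) / (2 * a2) + a1 * s] with hf
  have hf0 : ∀ s, f s 0 = 1 / 2 - a2 * s := fun s => rfl
  have hf1 : ∀ s, f s 1 = (t - a1) / (2 * a2) + a1 * s := fun s => rfl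
  have hiso : Isometry f := by
    apply Isometry.of_dist_eq
    intro s u
    rw [EuclideanSpace.dist_eq]
    rw [Fin.sum_univ_two]
    have e0 : f s 0 = 1 / 2 - a2 * s := rfl
    have e1 : f s 1 = (t - a1) / (2 * a2) + a1 * s := rfl
    have e0' : f u 0 = 1 / 2 - a2 * u := rfl
    have e1' : f u 1 = (t - a1) / (2 * a2) + a1 * u := rfl
    rw [e0, e1, e0', e1', Real.dist_eq, Real.dist_eq, Real.dist_eq, sq_abs, sq_abs]
    have : (1 / 2 - a2 * s - (1 / 2 - a2 * u)) ^ 2 +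
        ((t - a1) / (2 * a2) + a1 * s - ((t - a1) / (2 * a2) + a1 * u)) ^ 2
        = (s - u) ^ 2 := by
      have : (1 / 2 - a2 * s - (1 / 2 - a2 * u)) ^ 2 +
        ((t - a1) / (2 * a2) + a1 * s - ((t - a1) / (2 * a2) + a1 * u)) ^ 2
        = (a1 ^ 2 + a2 ^ 2) * (s - u) ^ 2 := by ring
      rw [this, hunit, one_mul]
    rw [this, Real.sqrt_sq_eq_abs]
  -- set equality
  have hSeq : {x : EuclideanSpace ℝ (Fin 2) |
      (∀ i, |x i| ≤ 1 / 2) ∧ a1 * x 0 + a2 * x 1 = t / 2} = f '' Icc 0 L := by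
    ext x
    constructor
    · rintro ⟨hb, hline⟩
      have hb0 := hb 0
      have hb1 := hb 1
      rw [abs_le] at hb0 hb1
      refine ⟨(1 / 2 - x 0) / a2, ⟨div_nonneg (by linarith [hb0.2]) h2.le, ?_⟩, ?_⟩
      · rw [hLdef, div_le_div_iff₀ h2 (by positivity)]
        nlinarith [hb1.2, hline]
      · apply PiLp.ext; intro i
        fin_cases i
        · show f _ 0 = x 0
          rw [hf0]
          have : a2 * ((1 / 2 - x 0) / a2) = 1 / 2 - x 0 := by field_simp
          rw [this]; ring
        · show f _ 1 = x 1
          rw [hf1]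
          have h' : a1 * ((1 / 2 - x 0) / a2) = (a1 * (1 / 2 - x 0)) / a2 := by ring
          rw [h', div_add_div _ _ (by positivity : (2:ℝ) * a2 ≠ 0) ha2,
            div_eq_iff (by positivity : (2:ℝ) * a2 * a2 ≠ 0)]
          nlinarith [hline]
    · rintro ⟨s, ⟨hs0, hsL⟩, rfl⟩
      have hsL' : s * (2 * a1 * a2) ≤ a1 + a2 - t := by
        calc s * (2 * a1 * a2) ≤ L * (2 * a1 * a2) := by
              apply mul_le_mul_of_nonneg_right hsL (by positivity)
          _ = a1 + a2 - t := by rw [hLdef]; field_simp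
      have hrw : (t - a1) / (2 * a2) + a1 * s = ((t - a1) + 2 * a1 * a2 * s) / (2 * a2) := by
        field_simp
      constructor
      · intro i
        fin_cases i
        · show |f s 0| ≤ 1 / 2
          rw [hf0, abs_le]
          constructor <;> nlinarith [mul_nonneg h2.le hs0]
        · show |f s 1| ≤ 1 / 2
          rw [hf1, abs_le, hrw]
          constructor
          · rw [le_div_iff₀ (by positivity : (0:ℝ) < 2 * a2)]
            nlinarith [mul_nonneg (mul_nonneg h1.le h2.le) hs0]
          · rw [div_le_iff₀ (by positivity : (0:ℝ) < 2 * a2)]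
            nlinarith
      · rw [hf0, hf1]; field_simp; ring
  rw [hSeq]
  have hemb : MeasurableEmbedding f := hiso.isClosedEmbedding.measurableEmbedding
  have hmapeq : Measure.map f (μH[1] : Measure ℝ) = (μH[1] : Measure (EuclideanSpace ℝ (Fin 2))).restrict (range f) :=
    hiso.map_hausdorffMeasure (Or.inl one_pos.le)
  have hcompact : IsCompact (f '' Icc 0 L) := (isCompact_Icc).image hiso.continuous
  have hrestr : (μH[1] : Measure (EuclideanSpace ℝ (Fin 2))).restrict (f '' Icc 0 L)
      = (Measure.map f (μH[1] : Measure ℝ)).restrict (f '' Icc 0 L) := by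
    rw [hmapeq, Measure.restrict_restrict hcompact.measurableSet,
      inter_eq_self_of_subset_left (image_subset_range f _)]
  rw [hrestr, hemb.setIntegral_map, hemb.injective.preimage_image]
  simp only [hf0, hf1]
  rw [MeasureTheory.hausdorffMeasure_real, MeasureTheory.integral_Icc_eq_integral_Ioc,
    ← intervalIntegral.integral_of_le hLnn]
  have hsplit : (∫ s in (0:ℝ)..L, ((1 / 2 - a2 * s) ^ M + ((t - a1) / (2 * a2) + a1 * s) ^ M))
      = (∫ s in (0:ℝ)..L, (1 / 2 - a2 * s) ^ M)
        + ∫ s in (0:ℝ)..L, ((t - a1) / (2 * a2) + a1 * s) ^ M := by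
    apply intervalIntegral.integral_add
    · exact (Continuous.intervalIntegrable (by fun_prop) _ _)
    · exact (Continuous.intervalIntegrable (by fun_prop) _ _)
  rw [hsplit]
  have e1 : (∫ s in (0:ℝ)..L, (1 / 2 - a2 * s) ^ M)
      = (-a2)⁻¹ * ((((t - a2) / (2 * a1)) ^ (M + 1) - (1 / 2 : ℝ) ^ (M + 1)) / (M + 1)) := by
    have h : ∀ s : ℝ, (1 / 2 - a2 * s) ^ M = ((-a2) * s + 1 / 2) ^ M := by intro s; ring_nf
    simp_rw [h]
    rw [intervalIntegral.integral_comp_mul_add (f := fun x : ℝ => x ^ M) (neg_ne_zero.mpr ha2) (1/2)]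
    rw [integral_pow]
    have hend : (-a2) * L + 1 / 2 = (t - a2) / (2 * a1) := by
      rw [hLdef]; field_simp; ring
    rw [mul_zero, zero_add, hend, smul_eq_mul]
  have e2 : (∫ s in (0:ℝ)..L, ((t - a1) / (2 * a2) + a1 * s) ^ M)
      = a1⁻¹ * (((1 / 2 : ℝ) ^ (M + 1) - ((t - a1) / (2 * a2)) ^ (M + 1)) / (M + 1)) := by
    have h : ∀ s : ℝ, ((t - a1) / (2 * a2) + a1 * s) ^ M
        = (a1 * s + (t - a1) / (2 * a2)) ^ M := by intro s; ring_nf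
    simp_rw [h]
    rw [intervalIntegral.integral_comp_mul_add (f := fun x : ℝ => x ^ M) ha1 ((t - a1) / (2 * a2))]
    rw [integral_pow]
    have hend : a1 * L + (t - a1) / (2 * a2) = 1 / 2 := by
      rw [hLdef]; field_simp; ring
    rw [mul_zero, zero_add, hend, smul_eq_mul]
  rw [e1, e2]
  have hM : ((M : ℝ) + 1) ≠ 0 := by positivity
  have h2p : ((2 : ℝ)) ^ (M + 1) ≠ 0 := by positivity
  have p1 : ((t - a2) / (2 * a1)) ^ (M + 1) = (t - a2) ^ (M + 1) / (2 ^ (M + 1) * a1 ^ (M + 1)) := by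
    rw [div_pow, mul_pow]
  have p2 : ((t - a1) / (2 * a2)) ^ (M + 1) = (t - a1) ^ (M + 1) / (2 ^ (M + 1) * a2 ^ (M + 1)) := by
    rw [div_pow, mul_pow]
  rw [p1, p2]
  have h12M : ((1:ℝ) / 2) ^ M * 2 ^ M = 1 := by rw [← mul_pow]; norm_num
  field_simp
  linear_combination (a2 * a2 ^ M * a1 ^ 2 * a1 ^ M + a2 ^ 2 * a2 ^ M * a1 * a1 ^ M) * h12M
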